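/- Let r≥0, k≥1 and let β=(β_1,…,β_n) be a weak composition with n≥1 parts, and set β^-=(β_1,…,β_{n−1}). For 0≤ℓ≤k let Dom_ℓ = OP_{r;β^-,ℓ} × {subsets U⊆{0,…,ℓ−1} with |U|=β_n−k+ℓ} × {multisets B of size k−ℓ with elements in {0,…,ℓ}} and Dom'_ℓ = (OP^all_{r;β^-,ℓ}∖OP_{r;β^-,ℓ}) × {subsets U⊆{0,…,ℓ−1} with |U|=β_n−k+ℓ} × {multisets B of size k−ℓ−1 with elements in {0,…,ℓ}}. Then there exists a bijection Φ from the disjoint union over ℓ=0,…,k of Dom_ℓ ⊔ Dom'_ℓ onto OP_{r;β,k} such that inv(Φ(π,U,B)) = inv(π) + Σ_{u∈U} u + Σ_{b∈B} b for every triple (π,U,B) in the domain. -/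

import Mathlib

open scoped BigOperators

namespace omp

/-- The multiset `A(β) ∪ {0^r}`: the letter `i` (for `1 ≤ i ≤ m`) with multiplicity `β_i`,
together with `r` copies of the letter `0`. -/
def content (r : ℕ) (β : List ℕ) : Multiset ℕ :=
  Multiset.replicate r 0 +
    ∑ i ∈ Finset.range β.length, Multiset.replicate (β.getD i 0) (i + 1)

/-- `π` is an ordered multiset partition of `A(β) ∪ {0^r}` into `k` (nonempty) blocks,
with `0` allowed anywhere: the set `OP^all_{r;β,k}`. -/
def IsOPall (r : ℕ) (β : List ℕ) (k : ℕ) (π : List (Finset ℕ)) : Prop :=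
  π.length = k ∧ (∀ B ∈ π, B.Nonempty) ∧ (π.map Finset.val).sum = content r β

/-- Additionally, the last block does not contain `0`: the set `OP_{r;β,k}`. -/
def IsOP (r : ℕ) (β : List ℕ) (k : ℕ) (π : List (Finset ℕ)) : Prop :=
  IsOPall r β k π ∧ 0 ∉ π.getLastD ∅

/-- Ordered multiset partitions of `A(β) ∪ {0^r}` with shape `α`: `OP^all_{r;β,α}`. -/
def IsOPallSh (r : ℕ) (β α : List ℕ) (π : List (Finset ℕ)) : Prop :=
  (∀ B ∈ π, B.Nonempty) ∧ (π.map Finset.val).sum = content r β ∧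
    π.map Finset.card = α

/-- Shape `α` and last block avoiding `0`: `OP_{r;β,α}`. -/
def IsOPSh (r : ℕ) (β α : List ℕ) (π : List (Finset ℕ)) : Prop :=
  IsOPallSh r β α π ∧ 0 ∉ π.getLastD ∅

/-- The `i`-th block (0-indexed). -/
def blk (π : List (Finset ℕ)) (i : ℕ) : Finset ℕ := π.getD i ∅

/-- `inv`: pairs of a letter `a` in block `B_i` and the minimum `b` of a later block `B_j`
with `a > b`. -/
def inv (π : List (Finset ℕ)) : ℕ :=
  ∑ i ∈ Finset.range π.length, ∑ j ∈ Finset.range π.length,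
    if i < j then
      (@Finset.filter ℕ (fun (a : ℕ) => (blk π j).min < (a : WithBot ℕ))
        (fun a => (inferInstance : DecidableRel (· < · : WithTop ℕ → WithTop ℕ → Prop)) _ _)
        (blk π i)).card
    else 0

/-- The word `σ(π)`: each block written in decreasing order, blocks concatenated. -/
def sigmaWord (π : List (Finset ℕ)) : List ℕ :=
  (π.map (fun B => (B.sort (· ≤ ·)).reverse)).flatten

/-- The word `ind(π) = 0^{|B_1|} 1^{|B_2|} ⋯ (k-1)^{|B_k|}`. -/
def indWord (π : List (Finset ℕ)) : List ℕ :=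
  (π.zipIdx.map (fun p => List.replicate p.1.card p.2)).flatten

/-- The major index of a word (positions are 1-based). -/
def majW (w : List ℕ) : ℕ :=
  ∑ i ∈ Finset.range (w.length - 1),
    if w.getD (i + 1) 0 < w.getD i 0 then i + 1 else 0

/-- `maj(π)`: the sum of `ind(π)_{i+1}` over descents `σ_i > σ_{i+1}` of `σ(π)`. -/
def maj (π : List (Finset ℕ)) : ℕ :=
  ∑ i ∈ Finset.range ((sigmaWord π).length - 1),
    if (sigmaWord π).getD (i + 1) 0 < (sigmaWord π).getD i 0 then
      (indWord π).getD (i + 1) 0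
    else 0

/-- `dinv(π)`: primary and secondary diagonal inversions, where `B_i^h` is the `h`-th smallest
element of block `B_i` (here `h` is 0-indexed). -/
def dinv (π : List (Finset ℕ)) : ℕ :=
  ∑ i ∈ Finset.range π.length, ∑ j ∈ Finset.range π.length,
    if i < j then
      ((Finset.range (blk π i).card).filter (fun h =>
          h < (blk π j).card ∧
            ((blk π j).sort (· ≤ ·)).getD h 0 < ((blk π i).sort (· ≤ ·)).getD h 0)).card +
      ((Finset.range (blk π i).card).filter (fun h =>
          h + 1 < (blk π j).card ∧
            ((blk π j).sort (· ≤ ·)).getD (h + 1) 0 < ((blk π i).sort (· ≤ ·)).getD h 0)).card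
    else 0

/-- `miniword(π)`, built from right to left: the last block in increasing order; inductively,
if the word built so far begins with `s`, block `B_i` contributes its elements greater than `s`
in increasing order followed by its elements at most `s` in increasing order. -/
def miniword : List (Finset ℕ) → List ℕ
  | [] => []
  | B :: rest =>
    match miniword rest with
    | [] => B.sort (· ≤ ·)
    | s :: w =>
        ((B.filter (fun x => s < x)).sort (· ≤ ·) ++
          (B.filter (fun x => x ≤ s)).sort (· ≤ ·)) ++ s :: w

/-- `minimaj(π) = maj(miniword(π))`. -/
def minimaj (π : List (Finset ℕ)) : ℕ := majW (miniword π)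

/-- `D^{stat}_{r;β,k}(q) = Σ_{π ∈ OP_{r;β,k}} q^{stat(π)}` (the set is finite, so the
finite-support sum below is the intended polynomial). -/
noncomputable def D (r : ℕ) (β : List ℕ) (k : ℕ)
    (stat : List (Finset ℕ) → ℕ) : Polynomial ℕ :=
  ∑ᶠ π ∈ {π | IsOP r β k π}, Polynomial.X ^ stat π

/-- `D^{stat+}_{r;β,k}(q) = Σ_{π ∈ OP^all_{r;β,k}} q^{stat(π)}`. -/
noncomputable def Dall (r : ℕ) (β : List ℕ) (k : ℕ)
    (stat : List (Finset ℕ) → ℕ) : Polynomial ℕ :=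
  ∑ᶠ π ∈ {π | IsOPall r β k π}, Polynomial.X ^ stat π

/-- `D^{stat}_{r;β,α}(q)`, the shape-refined generating function. -/
noncomputable def DSh (r : ℕ) (β α : List ℕ)
    (stat : List (Finset ℕ) → ℕ) : Polynomial ℕ :=
  ∑ᶠ π ∈ {π | IsOPSh r β α π}, Polynomial.X ^ stat π

/-- `D^{stat+}_{r;β,α}(q)`, the shape-refined generating function with `0` allowed
in the last block. -/
noncomputable def DallSh (r : ℕ) (β α : List ℕ)
    (stat : List (Finset ℕ) → ℕ) : Polynomial ℕ :=
  ∑ᶠ π ∈ {π | IsOPallSh r β α π}, Polynomial.X ^ stat π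

end omp


namespace omp

/-- The domain of the insertion maps: the disjoint union over `0 ≤ ℓ ≤ k` of
`Dom_ℓ = OP_{r;β^-,ℓ} × {U ⊆ {0,…,ℓ−1} : |U| = β_n−k+ℓ} × {multisets B of size k−ℓ in {0,…,ℓ}}`
and
`Dom'_ℓ = (OP^all_{r;β^-,ℓ} ∖ OP_{r;β^-,ℓ}) × {U ⊆ {0,…,ℓ−1} : |U| = β_n−k+ℓ} ×
{multisets B of size k−ℓ−1 in {0,…,ℓ}}`
(the cardinality constraints are stated additively so that they are empty when the prescribed
size would be negative). -/
def Dom (r : ℕ) (β : List ℕ) (k : ℕ) :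
    Set (List (Finset ℕ) × Finset ℕ × Multiset ℕ) :=
  {x | ∃ ℓ ≤ k,
    ((IsOP r β.dropLast ℓ x.1 ∧ x.2.2.card + ℓ = k) ∨
      ((IsOPall r β.dropLast ℓ x.1 ∧ ¬ IsOP r β.dropLast ℓ x.1) ∧
        x.2.2.card + ℓ + 1 = k)) ∧
    x.2.1 ⊆ Finset.range ℓ ∧ x.2.1.card + k = β.getLastD 0 + ℓ ∧
    ∀ b ∈ x.2.2, b ≤ ℓ}

end omp


namespace omp

instance decMinLt (C : Finset ℕ) : DecidablePred (fun (a : ℕ) => C.min < (a : WithBot ℕ)) :=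
  fun a => (inferInstance : DecidableRel (· < · : WithTop ℕ → WithTop ℕ → Prop)) _ _

@[simp] lemma blk_cons_zero (A : Finset ℕ) (t : List (Finset ℕ)) : blk (A::t) 0 = A := rfl
@[simp] lemma blk_cons_succ (A : Finset ℕ) (t : List (Finset ℕ)) (j : ℕ) :
    blk (A::t) (j+1) = blk t j := rfl

def invsum (t : List (Finset ℕ)) (A : Finset ℕ) : ℕ :=
  ∑ j ∈ Finset.range t.length,
    (A.filter (fun (a : ℕ) => (blk t j).min < (a : WithBot ℕ))).card

@[simp] lemma invsum_nil (A : Finset ℕ) : invsum [] A = 0 := by simp [invsum]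

lemma invsum_cons (C : Finset ℕ) (t : List (Finset ℕ)) (A : Finset ℕ) :
    invsum (C :: t) A =
      (A.filter (fun (a : ℕ) => C.min < (a : WithBot ℕ))).card + invsum t A := by
  unfold invsum
  simp only [List.length_cons]
  rw [Finset.sum_range_succ']
  simp only [blk_cons_succ, blk_cons_zero]
  exact add_comm _ _

lemma invsum_append (xs ys : List (Finset ℕ)) (A : Finset ℕ) :
    invsum (xs ++ ys) A = invsum xs A + invsum ys A := by
  induction xs with
  | nil => simp
  | cons C t ih => simp [invsum_cons, ih, add_assoc, List.cons_append]

@[simp] lemma inv_nil : inv [] = 0 := by simp [inv]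

lemma inv_cons (A : Finset ℕ) (t : List (Finset ℕ)) :
    inv (A :: t) = invsum t A + inv t := by
  unfold inv
  simp only [List.length_cons]
  rw [Finset.sum_range_succ']
  have h0 : (∑ j ∈ Finset.range (t.length+1),
      if 0 < j then ((blk (A::t) 0).filter
        (fun (a : ℕ) => (blk (A::t) j).min < (a : WithBot ℕ))).card else 0) = invsum t A := by
    rw [Finset.sum_range_succ']
    simp [invsum]
    rfl
  have h1 : (∑ i ∈ Finset.range t.length, ∑ j ∈ Finset.range (t.length+1),
      if i+1 < j then ((blk (A::t) (i+1)).filter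
        (fun (a : ℕ) => (blk (A::t) j).min < (a : WithBot ℕ))).card else 0) = inv t := by
    unfold inv
    apply Finset.sum_congr rfl
    intro i _
    rw [Finset.sum_range_succ']
    simp [Nat.succ_lt_succ_iff]
    rfl
  rw [h0, h1]
  exact add_comm _ _
def ins (m : ℕ) : List (Finset ℕ) → Finset ℕ → Multiset ℕ → List (Finset ℕ)
  | [], _, B => List.replicate (B.count 0) {m}
  | A :: t, U, B => List.replicate (B.count (t.length+1)) {m} ++
      (if t.length ∈ U then insert m A else A) :: ins m t U B

def Small (m : ℕ) (π : List (Finset ℕ)) : Prop :=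
  ∀ A ∈ π, A.Nonempty ∧ ∀ a ∈ A, a < m

lemma small_cons {m : ℕ} {A : Finset ℕ} {t : List (Finset ℕ)} (h : Small m (A :: t)) :
    Small m t := fun C hC => h C (List.mem_cons_of_mem _ hC)

lemma cast_wb (C : Finset ℕ) (a : ℕ) :
    (C.min < (a : WithBot ℕ)) ↔ (C.min < ((a : ℕ) : WithTop ℕ)) := Iff.rfl

lemma min_lt_of_small {m : ℕ} {A : Finset ℕ} (hne : A.Nonempty) (hlt : ∀ a ∈ A, a < m) :
    A.min < ((m : ℕ) : WithTop ℕ) := by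
  rw [← Finset.coe_min' hne]
  exact WithTop.coe_lt_coe.2 (hlt _ (A.min'_mem hne))

lemma min_insert_of_small {m : ℕ} {A : Finset ℕ} (hne : A.Nonempty) (hlt : ∀ a ∈ A, a < m) :
    (insert m A).min = A.min := by
  rw [Finset.min_insert]
  exact min_eq_right (le_of_lt (min_lt_of_small hne hlt))

/-- count helper -/
def cnt (C A : Finset ℕ) : ℕ :=
  (A.filter (fun (a : ℕ) => C.min < (a : WithBot ℕ))).card

lemma cnt_singleton_m {m : ℕ} {A : Finset ℕ} (h : ∀ a ∈ A, a ≤ m) :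
    cnt {m} A = 0 := by
  unfold cnt
  rw [Finset.card_eq_zero, Finset.filter_eq_empty_iff]
  intro a ha
  rw [cast_wb, Finset.min_singleton]
  exact not_lt.2 (WithTop.coe_le_coe.2 (h a ha))

lemma cnt_insert {m : ℕ} {C A : Finset ℕ} (hm : m ∉ A) (hC : C.min < ((m:ℕ) : WithTop ℕ)) :
    cnt C (insert m A) = cnt C A + 1 := by
  unfold cnt
  rw [Finset.filter_insert, if_pos ((cast_wb C m).2 hC), Finset.card_insert_of_notMem]
  intro h
  exact hm (Finset.mem_of_mem_filter _ h)

lemma cnt_m_of_lt {m : ℕ} {C : Finset ℕ} (hC : C.min < ((m:ℕ) : WithTop ℕ)) :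
    cnt C {m} = 1 := by
  unfold cnt
  rw [Finset.filter_singleton, if_pos ((cast_wb C m).2 hC), Finset.card_singleton]

lemma invsum_cons' (C : Finset ℕ) (t : List (Finset ℕ)) (A : Finset ℕ) :
    invsum (C :: t) A = cnt C A + invsum t A := invsum_cons C t A

@[simp] lemma invsum_empty (t : List (Finset ℕ)) : invsum t ∅ = 0 := by simp [invsum]

lemma invsum_replicate {m c : ℕ} {A : Finset ℕ} (h : ∀ a ∈ A, a ≤ m) :
    invsum (List.replicate c ({m} : Finset ℕ)) A = 0 := by
  induction c with
  | zero => simp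
  | succ n ih => rw [List.replicate_succ, invsum_cons', cnt_singleton_m h, ih]

lemma inv_replicate_append (m c : ℕ) (w : List (Finset ℕ)) :
    inv (List.replicate c ({m} : Finset ℕ) ++ w) = c * invsum w {m} + inv w := by
  induction c with
  | zero => simp
  | succ n ih =>
      rw [List.replicate_succ, List.cons_append, inv_cons, ih, invsum_append,
        invsum_replicate (by simp : ∀ a ∈ ({m} : Finset ℕ), a ≤ m)]
      ring

lemma invsum_insert_small {m : ℕ} {t : List (Finset ℕ)} {A : Finset ℕ}
    (hS : Small m t) (hm : m ∉ A) :
    invsum t (insert m A) = invsum t A + t.length := by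
  induction t with
  | nil => simp
  | cons C rest ih =>
      obtain ⟨hne, hlt⟩ := hS C (List.mem_cons_self)
      rw [invsum_cons', invsum_cons', cnt_insert hm (min_lt_of_small hne hlt),
        ih (small_cons hS)]
      simp [List.length_cons]; ring

lemma invsum_singleton_small {m : ℕ} {t : List (Finset ℕ)} (hS : Small m t) :
    invsum t ({m} : Finset ℕ) = t.length := by
  have : ({m} : Finset ℕ) = insert m ∅ := rfl
  rw [this, invsum_insert_small hS (Finset.notMem_empty m), invsum_empty]
  simp

lemma invsum_ins {m : ℕ} {t : List (Finset ℕ)} {U : Finset ℕ} {B : Multiset ℕ}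
    {A : Finset ℕ} (hS : Small m t) (hA : ∀ a ∈ A, a ≤ m) :
    invsum (ins m t U B) A = invsum t A := by
  induction t with
  | nil => exact invsum_replicate hA
  | cons D rest ih =>
      obtain ⟨hne, hlt⟩ := hS D (List.mem_cons_self)
      rw [ins, invsum_append, invsum_replicate hA, invsum_cons', invsum_cons',
        ih (small_cons hS)]
      have hmin : (if rest.length ∈ U then insert m D else D).min = D.min := by
        split
        · exact min_insert_of_small hne hlt
        · rfl
      unfold cnt
      simp only [hmin]
      ring

lemma filter_lt_succ (U : Finset ℕ) (n : ℕ) :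
    U.filter (· < n+1) =
      if n ∈ U then insert n (U.filter (· < n)) else U.filter (· < n) := by
  split
  · next h =>
      ext u
      simp only [Finset.mem_filter, Finset.mem_insert]
      constructor
      · rintro ⟨hu, hlt⟩
        rcases Nat.lt_succ_iff_lt_or_eq.1 hlt with h' | h'
        · exact Or.inr ⟨hu, h'⟩
        · exact Or.inl h'
      · rintro (rfl | ⟨hu, hlt⟩)
        · exact ⟨h, Nat.lt_succ_self _⟩
        · exact ⟨hu, Nat.lt_succ_of_lt hlt⟩
  · next h =>
      apply Finset.filter_congr
      intro u hu
      constructor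
      · intro hlt
        rcases Nat.lt_succ_iff_lt_or_eq.1 hlt with h' | h'
        · exact h'
        · exact absurd (h' ▸ hu) h
      · exact Nat.lt_succ_of_lt

lemma sum_filter_lt_succ (U : Finset ℕ) (n : ℕ) :
    (∑ u ∈ U.filter (· < n+1), u) =
      (∑ u ∈ U.filter (· < n), u) + (if n ∈ U then n else 0) := by
  rw [filter_lt_succ]
  split
  · next h =>
      rw [Finset.sum_insert (by simp)]
      ring
  · next h => omega

lemma card_filter_lt_succ (U : Finset ℕ) (n : ℕ) :
    (U.filter (· < n+1)).card =
      (U.filter (· < n)).card + (if n ∈ U then 1 else 0) := by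
  rw [filter_lt_succ]
  split
  · next h => rw [Finset.card_insert_of_notMem (by simp)]
  · next h => omega

lemma mfilter_le_zero (B : Multiset ℕ) :
    B.filter (· ≤ 0) = Multiset.replicate (B.count 0) 0 := by
  ext a
  rw [Multiset.count_filter, Multiset.count_replicate]
  rcases eq_or_ne a 0 with rfl | h
  · rw [if_pos (le_refl 0), if_pos rfl]
  · rw [if_neg (by omega), if_neg (by omega)]

lemma mfilter_le_succ (B : Multiset ℕ) (n : ℕ) :
    B.filter (· ≤ n+1) =
      B.filter (· ≤ n) + Multiset.replicate (B.count (n+1)) (n+1) := by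
  ext a
  rw [Multiset.count_filter, Multiset.count_add, Multiset.count_filter,
    Multiset.count_replicate]
  rcases eq_or_ne a (n+1) with rfl | h1
  · rw [if_pos (le_refl _), if_neg (by omega), if_pos rfl]
    omega
  · by_cases h2 : a ≤ n
    · rw [if_pos (by omega), if_pos h2, if_neg (by omega)]
      omega
    · rw [if_neg (by omega), if_neg h2, if_neg (by omega)]

lemma inv_ins {m : ℕ} (π : List (Finset ℕ)) (U : Finset ℕ) (B : Multiset ℕ)
    (hS : Small m π) :
    inv (ins m π U B) = inv π + (∑ u ∈ U.filter (· < π.length), u)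
      + (B.filter (· ≤ π.length)).sum := by
  induction π with
  | nil =>
      rw [show ins m [] U B = List.replicate (B.count 0) {m} from rfl,
        ← List.append_nil (List.replicate (B.count 0) ({m} : Finset ℕ)),
        inv_replicate_append]
      simp [mfilter_le_zero, Nat.not_lt_zero]
      symm
      apply Multiset.sum_eq_zero
      intro x hx
      exact (Multiset.mem_filter.1 hx).2
  | cons A t ih =>
      obtain ⟨hne, hlt⟩ := hS A (List.mem_cons_self)
      have hSt := small_cons hS
      have hA'min : (if t.length ∈ U then insert m A else A).min = A.min := by
        split
        · exact min_insert_of_small hne hlt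
        · rfl
      have hAle : ∀ a ∈ A, a ≤ m := fun a ha => le_of_lt (hlt a ha)
      rw [show ins m (A::t) U B = List.replicate (B.count (t.length+1)) {m} ++
          ((if t.length ∈ U then insert m A else A) :: ins m t U B) from rfl,
        inv_replicate_append, inv_cons, invsum_cons',
        cnt_m_of_lt (show (if t.length ∈ U then insert m A else A).min <
          ((m:ℕ) : WithTop ℕ) by rw [hA'min]; exact min_lt_of_small hne hlt),
        invsum_ins hSt (by simp : ∀ a ∈ ({m} : Finset ℕ), a ≤ m),
        invsum_singleton_small hSt]
      have h2 : invsum (ins m t U B) (if t.length ∈ U then insert m A else A)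
          = invsum t A + (if t.length ∈ U then t.length else 0) := by
        split
        · next h =>
            rw [invsum_ins hSt (fun a ha => by
                rcases Finset.mem_insert.1 ha with rfl | ha
                · exact le_refl a
                · exact hAle a ha),
              invsum_insert_small hSt (fun hm => absurd (hlt m hm) (lt_irrefl m))]
        · next h => rw [invsum_ins hSt hAle, add_zero]
      rw [h2, ih hSt, inv_cons, List.length_cons, sum_filter_lt_succ,
        mfilter_le_succ, Multiset.sum_add, Multiset.sum_replicate, smul_eq_mul]
      ring

lemma replicate_val_sum (c m : ℕ) :
    ((List.replicate c ({m} : Finset ℕ)).map Finset.val).sum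
      = Multiset.replicate c m := by
  induction c with
  | zero => simp
  | succ n ih =>
      rw [List.replicate_succ, List.map_cons, List.sum_cons, ih, Multiset.replicate_succ]
      rfl

lemma ins_nonempty {m : ℕ} {π : List (Finset ℕ)} {U : Finset ℕ} {B : Multiset ℕ}
    (h : ∀ A ∈ π, A.Nonempty) : ∀ C ∈ ins m π U B, C.Nonempty := by
  induction π with
  | nil =>
      intro C hC
      rw [List.eq_of_mem_replicate hC]
      exact ⟨m, Finset.mem_singleton_self m⟩
  | cons A t ih =>
      intro C hC
      rw [show ins m (A::t) U B = List.replicate (B.count (t.length+1)) {m} ++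
          ((if t.length ∈ U then insert m A else A) :: ins m t U B) from rfl] at hC
      rcases List.mem_append.1 hC with h1 | h1
      · rw [List.eq_of_mem_replicate h1]
        exact ⟨m, Finset.mem_singleton_self m⟩
      · rcases List.mem_cons.1 h1 with rfl | h1
        · split
          · exact Finset.insert_nonempty _ _
          · exact h A (List.mem_cons_self)
        · exact ih (fun D hD => h D (List.mem_cons_of_mem _ hD)) C h1

lemma length_ins (m : ℕ) (π : List (Finset ℕ)) (U : Finset ℕ) (B : Multiset ℕ) :
    (ins m π U B).length = π.length + (B.filter (· ≤ π.length)).card := by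
  induction π with
  | nil =>
      rw [show ins m [] U B = List.replicate (B.count 0) {m} from rfl]
      simp only [List.length_replicate, List.length_nil, mfilter_le_zero,
        Multiset.card_replicate, Nat.zero_add]
  | cons A t ih =>
      rw [show ins m (A::t) U B = List.replicate (B.count (t.length+1)) {m} ++
          ((if t.length ∈ U then insert m A else A) :: ins m t U B) from rfl]
      rw [List.length_append, List.length_replicate, List.length_cons, ih,
        List.length_cons, mfilter_le_succ, Multiset.card_add, Multiset.card_replicate]
      omega

lemma sumval_ins (m : ℕ) (π : List (Finset ℕ)) (U : Finset ℕ) (B : Multiset ℕ)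
    (hm : ∀ A ∈ π, m ∉ A) :
    ((ins m π U B).map Finset.val).sum
      = (π.map Finset.val).sum +
        Multiset.replicate ((U.filter (· < π.length)).card
          + (B.filter (· ≤ π.length)).card) m := by
  induction π with
  | nil =>
      rw [show ins m [] U B = List.replicate (B.count 0) {m} from rfl,
        replicate_val_sum]
      simp only [List.length_nil, mfilter_le_zero, Multiset.card_replicate,
        List.map_nil, List.sum_nil]
      rw [Finset.filter_false_of_mem (fun u _ => Nat.not_lt_zero u)]
      simp
  | cons A t ih =>
      have hmA : m ∉ A := hm A (List.mem_cons_self)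
      have hmt : ∀ C ∈ t, m ∉ C := fun C hC => hm C (List.mem_cons_of_mem _ hC)
      rw [show ins m (A::t) U B = List.replicate (B.count (t.length+1)) {m} ++
          ((if t.length ∈ U then insert m A else A) :: ins m t U B) from rfl]
      rw [List.map_append, List.sum_append, List.map_cons, List.sum_cons,
        replicate_val_sum, ih hmt, List.map_cons, List.sum_cons, List.length_cons,
        card_filter_lt_succ, mfilter_le_succ, Multiset.card_add, Multiset.card_replicate]
      have hval : (if t.length ∈ U then insert m A else A).val
          = A.val + Multiset.replicate (if t.length ∈ U then 1 else 0) m := by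
        split
        · rw [Finset.insert_val_of_notMem hmA, Multiset.replicate_one, add_comm,
            Multiset.singleton_add]
        · simp
      rw [hval]
      ext a
      simp only [Multiset.count_add, Multiset.count_replicate]
      split_ifs <;> omega

lemma getLastD_cons_of_ne_nil (a d : Finset ℕ) {l : List (Finset ℕ)} (h : l ≠ []) :
    (a :: l).getLastD d = l.getLastD d := by
  cases l with
  | nil => exact absurd rfl h
  | cons b t => rfl

lemma getLastD_replicate (c m : ℕ) :
    (List.replicate (c+1) ({m} : Finset ℕ)).getLastD ∅ = {m} := by
  induction c with
  | zero => rfl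
  | succ n ih =>
      rw [List.replicate_succ, getLastD_cons_of_ne_nil _ _ (by simp), ih]

lemma getLastD_append_cons (xs : List (Finset ℕ)) (y : Finset ℕ) (ys : List (Finset ℕ))
    (d : Finset ℕ) : (xs ++ y :: ys).getLastD d = (y :: ys).getLastD d := by
  induction xs with
  | nil => rfl
  | cons a t ih => rw [List.cons_append, getLastD_cons_of_ne_nil _ _ (by simp), ih]

lemma ins_eq_nil {m : ℕ} {π : List (Finset ℕ)} {U : Finset ℕ} {B : Multiset ℕ} :
    ins m π U B = [] ↔ π = [] ∧ B.count 0 = 0 := by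
  cases π with
  | nil =>
      rw [show ins m [] U B = List.replicate (B.count 0) {m} from rfl]
      simp
  | cons A t =>
      rw [show ins m (A::t) U B = List.replicate (B.count (t.length+1)) {m} ++
          ((if t.length ∈ U then insert m A else A) :: ins m t U B) from rfl]
      constructor
      · intro h
        rcases List.append_eq_nil_iff.1 h with ⟨-, h2⟩
        exact absurd h2 (List.cons_ne_nil _ _)
      · rintro ⟨h, -⟩
        exact absurd h (List.cons_ne_nil _ _)

lemma zero_mem_getLastD_ins {m : ℕ} (hm : m ≠ 0) (π : List (Finset ℕ)) (U : Finset ℕ)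
    (B : Multiset ℕ) :
    (0 ∈ (ins m π U B).getLastD ∅) ↔ (B.count 0 = 0 ∧ 0 ∈ π.getLastD ∅) := by
  induction π with
  | nil =>
      rcases Nat.eq_zero_or_pos (B.count 0) with h | h
      · rw [show ins m [] U B = List.replicate (B.count 0) {m} from rfl, h]
        simp [h]
      · obtain ⟨c, hc⟩ : ∃ c, B.count 0 = c + 1 := ⟨B.count 0 - 1, by omega⟩
        rw [show ins m [] U B = List.replicate (B.count 0) {m} from rfl, hc,
          getLastD_replicate]
        simp only [Finset.mem_singleton, hc]
        constructor
        · intro h'; exact absurd h'.symm hm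
        · rintro ⟨h', -⟩; omega
  | cons A t ih =>
      rw [show ins m (A::t) U B = List.replicate (B.count (t.length+1)) {m} ++
          ((if t.length ∈ U then insert m A else A) :: ins m t U B) from rfl,
        getLastD_append_cons]
      by_cases hnil : ins m t U B = []
      · obtain ⟨ht, hB0⟩ := ins_eq_nil.1 hnil
        subst ht
        rw [hnil, hB0]
        have hlast : ((if ([] : List (Finset ℕ)).length ∈ U then insert m A else A)
            :: ([] : List (Finset ℕ))).getLastD ∅
            = (if ([] : List (Finset ℕ)).length ∈ U then insert m A else A) := rfl
        rw [hlast]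
        have hlast2 : (A :: ([] : List (Finset ℕ))).getLastD ∅ = A := rfl
        rw [hlast2]
        split
        · simp [Finset.mem_insert, Ne.symm hm]
        · simp
      · rw [getLastD_cons_of_ne_nil _ _ hnil, ih]
        cases t with
        | nil =>
            have hc : B.count 0 ≠ 0 := fun h => hnil (ins_eq_nil.2 ⟨rfl, h⟩)
            simp [hc]
        | cons C w =>
            rw [getLastD_cons_of_ne_nil A ∅ (List.cons_ne_nil C w)]

lemma ins_congrB {m : ℕ} {π : List (Finset ℕ)} {U : Finset ℕ} {B₁ B₂ : Multiset ℕ}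
    (h : ∀ j ≤ π.length, B₁.count j = B₂.count j) : ins m π U B₁ = ins m π U B₂ := by
  induction π with
  | nil =>
      rw [show ins m [] U B₁ = List.replicate (B₁.count 0) {m} from rfl,
        show ins m [] U B₂ = List.replicate (B₂.count 0) {m} from rfl,
        h 0 (Nat.le_refl 0)]
  | cons A t ih =>
      rw [show ins m (A::t) U B₁ = List.replicate (B₁.count (t.length+1)) {m} ++
          ((if t.length ∈ U then insert m A else A) :: ins m t U B₁) from rfl,
        show ins m (A::t) U B₂ = List.replicate (B₂.count (t.length+1)) {m} ++
          ((if t.length ∈ U then insert m A else A) :: ins m t U B₂) from rfl,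
        h (t.length+1) (Nat.le_refl _),
        ih (fun j hj => h j (Nat.le_succ_of_le hj))]

lemma ins_congrU {m : ℕ} {π : List (Finset ℕ)} {U₁ U₂ : Finset ℕ} {B : Multiset ℕ}
    (h : ∀ j < π.length, (j ∈ U₁ ↔ j ∈ U₂)) : ins m π U₁ B = ins m π U₂ B := by
  induction π with
  | nil => rfl
  | cons A t ih =>
      rw [show ins m (A::t) U₁ B = List.replicate (B.count (t.length+1)) {m} ++
          ((if t.length ∈ U₁ then insert m A else A) :: ins m t U₁ B) from rfl,
        show ins m (A::t) U₂ B = List.replicate (B.count (t.length+1)) {m} ++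
          ((if t.length ∈ U₂ then insert m A else A) :: ins m t U₂ B) from rfl]
      have h1 : (if t.length ∈ U₁ then insert m A else A)
          = (if t.length ∈ U₂ then insert m A else A) := by
        by_cases ht : t.length ∈ U₁
        · rw [if_pos ht, if_pos ((h t.length (Nat.lt_succ_self _)).1 ht)]
        · rw [if_neg ht, if_neg (fun hh => ht ((h t.length (Nat.lt_succ_self _)).2 hh))]
      rw [h1, ih (fun j hj => h j (Nat.lt_succ_of_lt hj))]

lemma ins_insert_len (m : ℕ) (π : List (Finset ℕ)) (U : Finset ℕ) (B : Multiset ℕ) :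
    ins m π U (B + {π.length}) = {m} :: ins m π U B := by
  cases π with
  | nil =>
      rw [show ins m [] U (B + {([] : List (Finset ℕ)).length})
          = List.replicate ((B + {([] : List (Finset ℕ)).length}).count 0) {m} from rfl,
        show ins m [] U B = List.replicate (B.count 0) {m} from rfl]
      rw [show (([] : List (Finset ℕ)).length) = 0 from rfl,
        Multiset.count_add, Multiset.count_singleton, if_pos rfl, List.replicate_succ]
  | cons A t =>
      simp only [List.length_cons]
      rw [show ins m (A::t) U (B + {t.length+1})
          = List.replicate ((B + {t.length+1}).count (t.length+1)) {m} ++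
          ((if t.length ∈ U then insert m A else A) :: ins m t U (B + {t.length+1})) from rfl,
        show ins m (A::t) U B = List.replicate (B.count (t.length+1)) {m} ++
          ((if t.length ∈ U then insert m A else A) :: ins m t U B) from rfl]
      rw [Multiset.count_add, Multiset.count_singleton, if_pos rfl, List.replicate_succ,
        List.cons_append]
      have : ins m t U (B + {t.length+1}) = ins m t U B :=
        ins_congrB (fun j hj => by
          rw [Multiset.count_add, Multiset.count_singleton, if_neg (by omega), add_zero])
      rw [this]

def dec (m : ℕ) : List (Finset ℕ) → List (Finset ℕ) × Finset ℕ × Multiset ℕ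
  | [] => ([], ∅, 0)
  | C :: w =>
    let p := dec m w
    if C = {m} then (p.1, p.2.1, p.2.2 + {p.1.length})
    else ((C.erase m) :: p.1,
      if m ∈ C then insert p.1.length p.2.1 else p.2.1, p.2.2)

lemma dec_cons (m : ℕ) (C : Finset ℕ) (w : List (Finset ℕ)) :
    dec m (C :: w) =
      if C = {m} then ((dec m w).1, (dec m w).2.1, (dec m w).2.2 + {(dec m w).1.length})
      else ((C.erase m) :: (dec m w).1,
        if m ∈ C then insert (dec m w).1.length (dec m w).2.1 else (dec m w).2.1,
        (dec m w).2.2) := rfl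

lemma dec_sub (m : ℕ) (ρ : List (Finset ℕ)) :
    (dec m ρ).2.1 ⊆ Finset.range (dec m ρ).1.length ∧
      ∀ b ∈ (dec m ρ).2.2, b ≤ (dec m ρ).1.length := by
  induction ρ with
  | nil => exact ⟨Finset.empty_subset _, fun b hb => absurd hb (Multiset.notMem_zero b)⟩
  | cons C w ih =>
      rw [dec_cons]
      split
      · refine ⟨ih.1, fun b hb => ?_⟩
        rcases Multiset.mem_add.1 hb with h | h
        · exact ih.2 b h
        · rw [Multiset.mem_singleton.1 h]
      · constructor
        · intro u hu
          rw [Finset.mem_range]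
          split at hu
          · rcases Finset.mem_insert.1 hu with rfl | hu
            · exact Nat.lt_succ_self _
            · exact Nat.lt_succ_of_lt (Finset.mem_range.1 (ih.1 hu))
          · exact Nat.lt_succ_of_lt (Finset.mem_range.1 (ih.1 hu))
        · exact fun b hb => Nat.le_succ_of_le (ih.2 b hb)

lemma dec_small {m : ℕ} {ρ : List (Finset ℕ)}
    (hρ : ∀ C ∈ ρ, C.Nonempty ∧ ∀ a ∈ C, a ≤ m) : Small m (dec m ρ).1 := by
  induction ρ with
  | nil => exact fun A hA => absurd hA List.not_mem_nil
  | cons C w ih =>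
      have hw := ih (fun D hD => hρ D (List.mem_cons_of_mem _ hD))
      rw [dec_cons]
      split
      · exact hw
      · next hC =>
          intro A hA
          rcases List.mem_cons.1 hA with rfl | hA
          · obtain ⟨hCne, hCle⟩ := hρ C (List.mem_cons_self)
            have hex : ∃ a ∈ C, a ≠ m := by
              by_contra hcon
              push_neg at hcon
              obtain ⟨a, ha⟩ := hCne
              have ham : m ∈ C := hcon a ha ▸ ha
              exact hC (Finset.eq_singleton_iff_unique_mem.2 ⟨ham, hcon⟩)
            obtain ⟨a, ha, hane⟩ := hex
            refine ⟨⟨a, Finset.mem_erase.2 ⟨hane, ha⟩⟩, fun b hb => ?_⟩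
            obtain ⟨hbne, hbC⟩ := Finset.mem_erase.1 hb
            exact lt_of_le_of_ne (hCle b hbC) hbne
          · exact hw A hA

lemma dec_replicate_append (m c : ℕ) (l : List (Finset ℕ)) :
    dec m (List.replicate c ({m} : Finset ℕ) ++ l)
      = ((dec m l).1, (dec m l).2.1,
          (dec m l).2.2 + Multiset.replicate c (dec m l).1.length) := by
  induction c with
  | zero => simp
  | succ n ih =>
      rw [List.replicate_succ, List.cons_append, dec_cons, if_pos rfl, ih]
      simp only [Prod.mk.injEq, true_and]
      rw [add_assoc]
      congr 1
      rw [Multiset.replicate_succ, add_comm, Multiset.singleton_add]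

lemma dec_ins {m : ℕ} {π : List (Finset ℕ)} {U : Finset ℕ} {B : Multiset ℕ}
    (hS : Small m π) :
    dec m (ins m π U B) = (π, U.filter (· < π.length), B.filter (· ≤ π.length)) := by
  induction π with
  | nil =>
      rw [show ins m [] U B = List.replicate (B.count 0) {m} from rfl,
        ← List.append_nil (List.replicate (B.count 0) ({m} : Finset ℕ)),
        dec_replicate_append]
      simp only [Prod.mk.injEq]
      refine ⟨rfl, ?_, ?_⟩
      · symm
        apply Finset.filter_false_of_mem
        intro u _
        simp
      · rw [show dec m [] = ([], ∅, (0 : Multiset ℕ)) from rfl]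
        simp only [List.length_nil, List.length_nil]
        rw [mfilter_le_zero]
        rfl
  | cons A t ih =>
      obtain ⟨hne, hlt⟩ := hS A (List.mem_cons_self)
      have hSt := small_cons hS
      have hmA : m ∉ A := fun hm => absurd (hlt m hm) (lt_irrefl m)
      set A' := (if t.length ∈ U then insert m A else A) with hA'
      have hA'ne : A' ≠ {m} := by
        obtain ⟨a, ha⟩ := hne
        have haA' : a ∈ A' := by
          rw [hA']; split
          · exact Finset.mem_insert_of_mem ha
          · exact ha
        intro hcon
        rw [hcon, Finset.mem_singleton] at haA'
        exact absurd (haA' ▸ hlt a ha) (lt_irrefl m)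
      rw [show ins m (A::t) U B = List.replicate (B.count (t.length+1)) {m} ++
          (A' :: ins m t U B) from rfl, dec_replicate_append, dec_cons, if_neg hA'ne,
        ih hSt]
      have hheadU : (if m ∈ A' then insert t.length (U.filter (· < t.length))
          else (U.filter (· < t.length))) = U.filter (· < t.length + 1) := by
        rw [filter_lt_succ, hA']
        by_cases ht : t.length ∈ U
        · rw [if_pos ht, if_pos ht, if_pos (Finset.mem_insert_self m A)]
        · rw [if_neg ht, if_neg ht, if_neg hmA]
      have hheadA : A'.erase m = A := by
        rw [hA']; split
        · exact Finset.erase_insert hmA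
        · exact Finset.erase_eq_of_notMem hmA
      simp only [Prod.mk.injEq, List.length_cons]
      refine ⟨by rw [hheadA], by rw [hheadU], ?_⟩
      rw [mfilter_le_succ]

lemma dec_length (m : ℕ) (ρ : List (Finset ℕ)) :
    ρ.length = (dec m ρ).1.length + Multiset.card (dec m ρ).2.2 := by
  induction ρ with
  | nil => rfl
  | cons C w ih =>
      rw [dec_cons, List.length_cons, ih]
      split
      · simp only [Multiset.card_add, Multiset.card_singleton]
        ring
      · simp only [List.length_cons]
        ring

lemma ins_dec (m : ℕ) (ρ : List (Finset ℕ))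
    (hρ : ∀ C ∈ ρ, C.Nonempty ∧ ∀ a ∈ C, a ≤ m) :
    ins m (dec m ρ).1 (dec m ρ).2.1 (dec m ρ).2.2 = ρ := by
  induction ρ with
  | nil => rfl
  | cons C w ih =>
      have hw : ∀ D ∈ w, D.Nonempty ∧ ∀ a ∈ D, a ≤ m :=
        fun D hD => hρ D (List.mem_cons_of_mem _ hD)
      rw [dec_cons]
      by_cases hC : C = {m}
      · rw [if_pos hC, ins_insert_len, ih hw, hC]
      · rw [if_neg hC]
        rw [show ins m ((C.erase m) :: (dec m w).1)
            (if m ∈ C then insert (dec m w).1.length (dec m w).2.1 else (dec m w).2.1)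
            (dec m w).2.2
          = List.replicate ((dec m w).2.2.count ((dec m w).1.length+1)) {m} ++
            ((if (dec m w).1.length ∈ (if m ∈ C then insert (dec m w).1.length (dec m w).2.1
                else (dec m w).2.1) then insert m (C.erase m) else (C.erase m)) ::
              ins m (dec m w).1
                (if m ∈ C then insert (dec m w).1.length (dec m w).2.1 else (dec m w).2.1)
                (dec m w).2.2) from rfl]
        have hcount : (dec m w).2.2.count ((dec m w).1.length+1) = 0 :=
          Multiset.count_eq_zero.2 (fun hmem => by
            have := (dec_sub m w).2 _ hmem; omega)
        rw [hcount, List.replicate_zero, List.nil_append]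
        have hU : ins m (dec m w).1
            (if m ∈ C then insert (dec m w).1.length (dec m w).2.1 else (dec m w).2.1)
            (dec m w).2.2 = ins m (dec m w).1 (dec m w).2.1 (dec m w).2.2 := by
          split
          · refine ins_congrU (fun j hj => ?_)
            rw [Finset.mem_insert]
            constructor
            · rintro (rfl | h)
              · exact absurd hj (lt_irrefl _)
              · exact h
            · exact Or.inr
          · rfl
        rw [hU, ih hw]
        congr 1
        by_cases hmC : m ∈ C
        · rw [if_pos hmC, if_pos (Finset.mem_insert_self _ _), Finset.insert_erase hmC]
        · rw [if_neg hmC,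
            if_neg (fun h => by
              have := Finset.mem_range.1 ((dec_sub m w).1 h); omega),
            Finset.erase_eq_of_notMem hmC]

lemma mem_sum_blocks {a : ℕ} {A : Finset ℕ} {π : List (Finset ℕ)}
    (hA : A ∈ π) (ha : a ∈ A) : a ∈ (π.map Finset.val).sum := by
  induction π with
  | nil => exact absurd hA List.not_mem_nil
  | cons C t ih =>
      rw [List.map_cons, List.sum_cons, Multiset.mem_add]
      rcases List.mem_cons.1 hA with rfl | hA
      · exact Or.inl ha
      · exact Or.inr (ih hA)

lemma exists_block_of_mem_sum {a : ℕ} {π : List (Finset ℕ)}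
    (h : a ∈ (π.map Finset.val).sum) : ∃ A ∈ π, a ∈ A := by
  induction π with
  | nil => simp at h
  | cons C t ih =>
      rw [List.map_cons, List.sum_cons, Multiset.mem_add] at h
      rcases h with h | h
      · exact ⟨C, List.mem_cons_self, h⟩
      · obtain ⟨A, hA, ha⟩ := ih h
        exact ⟨A, List.mem_cons_of_mem _ hA, ha⟩

lemma mem_content_le {a r : ℕ} {γ : List ℕ} (h : a ∈ content r γ) : a ≤ γ.length := by
  rcases Multiset.mem_add.1 h with h | h
  · rw [Multiset.eq_of_mem_replicate h]; exact Nat.zero_le _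
  · rw [Multiset.mem_sum] at h
    obtain ⟨i, hi, hmem⟩ := h
    rw [Multiset.eq_of_mem_replicate hmem]
    exact Nat.succ_le_of_lt (Finset.mem_range.1 hi)

lemma length_not_mem_content (r : ℕ) (β : List ℕ) (hβ : β ≠ []) :
    β.length ∉ content r β.dropLast := by
  intro h
  have h2 := mem_content_le h
  rw [List.length_dropLast] at h2
  have h3 : β.length ≠ 0 := fun h0 => hβ (List.length_eq_zero_iff.1 h0)
  omega

lemma content_dropLast (r : ℕ) (β : List ℕ) (hβ : β ≠ []) :
    content r β = content r β.dropLast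
      + Multiset.replicate (β.getLastD 0) β.length := by
  obtain ⟨l, x, rfl⟩ : ∃ l x, β = l ++ [x] :=
    ⟨β.dropLast, β.getLast hβ, (List.dropLast_append_getLast hβ).symm⟩
  rw [List.dropLast_concat, List.getLastD_concat]
  unfold content
  rw [List.length_append, List.length_singleton, Finset.sum_range_succ]
  have h1 : ∀ i ∈ Finset.range l.length,
      Multiset.replicate ((l ++ [x]).getD i 0) (i+1)
        = Multiset.replicate (l.getD i 0) (i+1) := by
    intro i hi
    rw [List.getD_append _ _ _ _ (Finset.mem_range.1 hi)]
  rw [Finset.sum_congr rfl h1]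
  have h2 : (l ++ [x]).getD l.length 0 = x := by
    rw [List.getD_append_right _ _ _ _ (le_refl _), Nat.sub_self]
    rfl
  rw [h2, add_assoc]

lemma small_of_opall {r : ℕ} {β : List ℕ} (hβ : β ≠ []) {ℓ : ℕ} {π : List (Finset ℕ)}
    (h : IsOPall r β.dropLast ℓ π) : Small β.length π := by
  intro A hA
  refine ⟨h.2.1 A hA, fun a ha => ?_⟩
  have h1 : a ∈ content r β.dropLast := h.2.2 ▸ mem_sum_blocks hA ha
  have h2 := mem_content_le h1
  rw [List.length_dropLast] at h2
  have h3 : β.length ≠ 0 := fun h0 => hβ (List.length_eq_zero_iff.1 h0)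
  omega

lemma good_of_op {r k : ℕ} {β : List ℕ} {ρ : List (Finset ℕ)} (hρ : IsOP r β k ρ) :
    ∀ C ∈ ρ, C.Nonempty ∧ ∀ a ∈ C, a ≤ β.length :=
  fun C hC => ⟨hρ.1.2.1 C hC,
    fun a ha => mem_content_le (hρ.1.2.2 ▸ mem_sum_blocks hC ha)⟩

lemma dom_unpack {r k : ℕ} {β : List ℕ} (hβ : β ≠ [])
    {x : List (Finset ℕ) × Finset ℕ × Multiset ℕ} (hx : x ∈ Dom r β k) :
    ∃ B'' : Multiset ℕ,
      B'' = x.2.2 + (if 0 ∈ x.1.getLastD ∅ then ({0} : Multiset ℕ) else 0) ∧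
      IsOPall r β.dropLast x.1.length x.1 ∧
      Multiset.card B'' + x.1.length = k ∧
      (∀ b ∈ B'', b ≤ x.1.length) ∧
      x.2.1 ⊆ Finset.range x.1.length ∧
      x.2.1.card + k = β.getLastD 0 + x.1.length ∧
      (0 ∈ x.1.getLastD ∅ → B''.count 0 ≠ 0) := by
  obtain ⟨ℓ, hℓk, hcase, hU, hUcard, hB⟩ := hx
  have hall : IsOPall r β.dropLast ℓ x.1 := by
    rcases hcase with ⟨hop, -⟩ | ⟨⟨hall, -⟩, -⟩
    · exact hop.1
    · exact hall
  have hlen : x.1.length = ℓ := hall.1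
  subst hlen
  refine ⟨_, rfl, hall, ?_, ?_, hU, hUcard, ?_⟩
  · rcases hcase with ⟨hop, hc⟩ | ⟨⟨hall', hnot⟩, hc⟩
    · rw [if_neg hop.2, add_zero]; exact hc
    · have h0 : 0 ∈ x.1.getLastD ∅ := by
        by_contra h0
        exact hnot ⟨hall', h0⟩
      rw [if_pos h0]
      simp only [Multiset.card_add, Multiset.card_singleton]
      omega
  · intro b hb
    rcases Multiset.mem_add.1 hb with h | h
    · exact hB b h
    · split at h
      · rw [Multiset.mem_singleton.1 h]; exact Nat.zero_le _
      · exact absurd h (Multiset.notMem_zero b)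
  · intro h0
    rcases hcase with ⟨hop, -⟩ | ⟨⟨hall', hnot⟩, -⟩
    · exact absurd h0 hop.2
    · rw [if_pos h0, Multiset.count_add, Multiset.count_singleton, if_pos rfl]
      omega

lemma mapsTo_aux {r k : ℕ} {β : List ℕ} (hβ : β ≠ [])
    {x : List (Finset ℕ) × Finset ℕ × Multiset ℕ} (hx : x ∈ Dom r β k) :
    IsOP r β k (ins β.length x.1 x.2.1
      (x.2.2 + (if 0 ∈ x.1.getLastD ∅ then ({0} : Multiset ℕ) else 0))) := by
  obtain ⟨B'', hBdef, hall, hcard, hBle, hU, hUcard, hc0⟩ := dom_unpack hβ hx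
  rw [← hBdef]
  have hm0 : β.length ≠ 0 := fun h0 => hβ (List.length_eq_zero_iff.1 h0)
  have hSmall : Small β.length x.1 := small_of_opall hβ hall
  have hfB : B''.filter (· ≤ x.1.length) = B'' :=
    Multiset.filter_eq_self.2 (fun b hb => hBle b hb)
  have hfU : x.2.1.filter (· < x.1.length) = x.2.1 :=
    Finset.filter_true_of_mem (fun u hu => Finset.mem_range.1 (hU hu))
  have hnm : ∀ A ∈ x.1, β.length ∉ A := fun A hA hmem =>
    absurd ((hSmall A hA).2 _ hmem) (lt_irrefl _)
  refine ⟨⟨?_, ins_nonempty hall.2.1, ?_⟩, ?_⟩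
  · rw [length_ins, hfB]; omega
  · rw [sumval_ins _ _ _ _ hnm, hfU, hfB, hall.2.2, content_dropLast r β hβ]
    congr 2
    omega
  · intro h
    obtain ⟨hcz, hlast⟩ := (zero_mem_getLastD_ins hm0 x.1 x.2.1 B'').1 h
    exact hc0 hlast hcz

lemma decode_aux {r k : ℕ} {β : List ℕ} (hβ : β ≠ [])
    {x : List (Finset ℕ) × Finset ℕ × Multiset ℕ} (hx : x ∈ Dom r β k) :
    dec β.length (ins β.length x.1 x.2.1
        (x.2.2 + (if 0 ∈ x.1.getLastD ∅ then ({0} : Multiset ℕ) else 0)))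
      = (x.1, x.2.1,
          x.2.2 + (if 0 ∈ x.1.getLastD ∅ then ({0} : Multiset ℕ) else 0)) := by
  obtain ⟨B'', hBdef, hall, hcard, hBle, hU, hUcard, hc0⟩ := dom_unpack hβ hx
  rw [← hBdef]
  have hSmall : Small β.length x.1 := small_of_opall hβ hall
  rw [dec_ins hSmall,
    Multiset.filter_eq_self.2 (fun b hb => hBle b hb),
    Finset.filter_true_of_mem (fun u hu => Finset.mem_range.1 (hU hu))]

lemma stat_aux {r k : ℕ} {β : List ℕ} (hβ : β ≠ [])
    {x : List (Finset ℕ) × Finset ℕ × Multiset ℕ} (hx : x ∈ Dom r β k) :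
    inv (ins β.length x.1 x.2.1
        (x.2.2 + (if 0 ∈ x.1.getLastD ∅ then ({0} : Multiset ℕ) else 0)))
      = inv x.1 + (∑ u ∈ x.2.1, u) + x.2.2.sum := by
  obtain ⟨B'', hBdef, hall, hcard, hBle, hU, hUcard, hc0⟩ := dom_unpack hβ hx
  rw [← hBdef]
  have hSmall : Small β.length x.1 := small_of_opall hβ hall
  rw [inv_ins _ _ _ hSmall,
    Multiset.filter_eq_self.2 (fun b hb => hBle b hb),
    Finset.filter_true_of_mem (fun u hu => Finset.mem_range.1 (hU hu)), hBdef,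
    Multiset.sum_add]
  have : (if 0 ∈ x.1.getLastD ∅ then ({0} : Multiset ℕ) else 0).sum = 0 := by
    split <;> rfl
  rw [this, add_zero]

lemma surj_aux {r k : ℕ} {β : List ℕ} (hβ : β ≠ []) {ρ : List (Finset ℕ)}
    (hρ : IsOP r β k ρ) :
    ∃ x ∈ Dom r β k,
      ins β.length x.1 x.2.1
        (x.2.2 + (if 0 ∈ x.1.getLastD ∅ then ({0} : Multiset ℕ) else 0)) = ρ := by
  classical
  have hm0 : β.length ≠ 0 := fun h0 => hβ (List.length_eq_zero_iff.1 h0)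
  have hgood := good_of_op hρ
  set m := β.length with hm
  set π := (dec m ρ).1 with hπ
  set U := (dec m ρ).2.1 with hUdef
  set B0 := (dec m ρ).2.2 with hB0
  have hins : ins m π U B0 = ρ := ins_dec m ρ hgood
  have hSmall : Small m π := dec_small hgood
  have hsub := dec_sub m ρ
  have hlenρ : ρ.length = π.length + Multiset.card B0 := dec_length m ρ
  have hk' : ρ.length = k := hρ.1.1
  have hnm : ∀ A ∈ π, m ∉ A := fun A hA hmem =>
    absurd ((hSmall A hA).2 _ hmem) (lt_irrefl _)
  have hfU : U.filter (· < π.length) = U :=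
    Finset.filter_true_of_mem (fun u hu => Finset.mem_range.1 (hsub.1 hu))
  have hfB : B0.filter (· ≤ π.length) = B0 :=
    Multiset.filter_eq_self.2 (fun b hb => hsub.2 b hb)
  have hsv : content r β
      = (π.map Finset.val).sum + Multiset.replicate (U.card + Multiset.card B0) m := by
    rw [← hρ.1.2.2, ← hins, sumval_ins m π U B0 hnm, hfU, hfB]
  have hcount : U.card + Multiset.card B0 = β.getLastD 0 := by
    have h1 := congrArg (Multiset.count m) hsv
    rw [content_dropLast r β hβ, Multiset.count_add, Multiset.count_add,
      Multiset.count_replicate, if_pos rfl, Multiset.count_replicate, if_pos rfl] at h1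
    have h2 : Multiset.count m (content r β.dropLast) = 0 :=
      Multiset.count_eq_zero.2 (length_not_mem_content r β hβ)
    have h3 : Multiset.count m ((π.map Finset.val).sum) = 0 :=
      Multiset.count_eq_zero.2 (fun hmem => by
        obtain ⟨A, hA, ha⟩ := exists_block_of_mem_sum hmem
        exact hnm A hA ha)
    omega
  have hπcontent : (π.map Finset.val).sum = content r β.dropLast := by
    have h4 : (π.map Finset.val).sum + Multiset.replicate (U.card + Multiset.card B0) m
        = content r β.dropLast + Multiset.replicate (U.card + Multiset.card B0) m := by
      rw [← hsv, content_dropLast r β hβ, hcount]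
    exact add_right_cancel h4
  have hOPallπ : IsOPall r β.dropLast π.length π :=
    ⟨rfl, fun A hA => (hSmall A hA).1, hπcontent⟩
  by_cases h0 : 0 ∈ π.getLastD ∅
  · have hc0 : 0 ∈ B0 := by
      by_contra hc
      have hcz : B0.count 0 = 0 := Multiset.count_eq_zero.2 hc
      have : 0 ∈ (ins m π U B0).getLastD ∅ :=
        (zero_mem_getLastD_ins hm0 π U B0).2 ⟨hcz, h0⟩
      rw [hins] at this
      exact hρ.2 this
    have hsum : (B0 - {0}) + {0} = B0 :=
      tsub_add_cancel_of_le (Multiset.singleton_le.2 hc0)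
    have hcards : Multiset.card (B0 - {0}) + 1 = Multiset.card B0 := by
      have := congrArg Multiset.card hsum
      simpa using this
    refine ⟨(π, U, B0 - {0}), ⟨π.length, by omega, Or.inr ⟨⟨hOPallπ,
      fun hop => hop.2 h0⟩, by simp only; omega⟩, hsub.1, by simp only; omega,
      fun b hb => hsub.2 b (Multiset.mem_of_le (tsub_le_self) hb)⟩, ?_⟩
    simp only
    rw [if_pos h0, hsum, hins]
  · refine ⟨(π, U, B0), ⟨π.length, by omega, Or.inl ⟨⟨hOPallπ, h0⟩, by simp only; omega⟩,
      hsub.1, by simp only; omega, fun b hb => hsub.2 b hb⟩, ?_⟩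
    simp only
    rw [if_neg h0, add_zero, hins]
end omp


/-- The insertion bijection for `inv`: there is a bijection `Φ` from the
disjoint union over `0 ≤ ℓ ≤ k` of `Dom_ℓ ⊔ Dom'_ℓ` onto `OP_{r;β,k}` with
`inv(Φ(π,U,B)) = inv(π) + Σ_{u∈U} u + Σ_{b∈B} b`. -/
theorem insertion_bijection_inv (r k : ℕ) (hk : 1 ≤ k) (β : List ℕ) (hβ : β ≠ []) :
    ∃ Φ : List (Finset ℕ) × Finset ℕ × Multiset ℕ → List (Finset ℕ),
      Set.BijOn Φ (omp.Dom r β k) {π | omp.IsOP r β k π} ∧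
      ∀ x ∈ omp.Dom r β k,
        omp.inv (Φ x) = omp.inv x.1 + (∑ u ∈ x.2.1, u) + x.2.2.sum := by

  classical
  refine ⟨fun x => omp.ins β.length x.1 x.2.1
      (x.2.2 + (if 0 ∈ x.1.getLastD ∅ then ({0} : Multiset ℕ) else 0)),
    ⟨fun x hx => omp.mapsTo_aux hβ hx, ?_, ?_⟩, fun x hx => omp.stat_aux hβ hx⟩
  · intro x hx y hy hxy
    obtain ⟨x1, x2, x3⟩ := x
    obtain ⟨y1, y2, y3⟩ := y
    have hdx := omp.decode_aux hβ hx
    have hdy := omp.decode_aux hβ hy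
    simp only at hxy hdx hdy
    rw [hxy, hdy] at hdx
    simp only [Prod.mk.injEq] at hdx ⊢
    obtain ⟨h1, h2, h3⟩ := hdx
    refine ⟨h1.symm, h2.symm, ?_⟩
    rw [h1] at h3
    exact (add_right_cancel h3).symm
  · intro ρ hρ
    obtain ⟨x, hx, hΦ⟩ := omp.surj_aux hβ hρ
    exact ⟨x, hx, hΦ⟩
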